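/- arXiv:2402.19234 — 2 statements merged into one kernel-verified Lean document; each statement's English description precedes it below -/
import Mathlib

section
/- If n = 3a-1 and a ≥ 4, then the broadcast independence number of the oriented circulant graph C⃗(n;1,a) equals ⌊n/2⌋. -/
/-- Arc relation of the oriented circulant graph C⃗(n;1,a): arcs u → u+1 and u → u+a (mod n). -/
def circArc (n : ℕ) (a : ℤ) (u v : ZMod n) : Prop :=
  v = u + 1 ∨ v = u + (a : ZMod n)

/-- There is a directed walk of length k from u to v in C⃗(n;1,a). -/
def circSteps (n : ℕ) (a : ℤ) (u v : ZMod n) (k : ℕ) : Prop :=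
  ∃ g : ℕ → ZMod n, g 0 = u ∧ g k = v ∧ ∀ i < k, circArc n a (g i) (g (i + 1))

/-- Directed distance: length of a shortest directed path from u to v. -/
noncomputable def circDist (n : ℕ) (a : ℤ) (u v : ZMod n) : ℕ :=
  sInf {k | circSteps n a u v k}

/-- Eccentricity of a vertex: maximum distance from it to any vertex. -/
noncomputable def circEcc (n : ℕ) (a : ℤ) (u : ZMod n) : ℕ :=
  sSup {d | ∃ v, d = circDist n a u v}

/-- Diameter: maximum eccentricity. -/
noncomputable def circDiam (n : ℕ) (a : ℤ) : ℕ :=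
  sSup {d | ∃ u, d = circEcc n a u}

/-- f is an independent broadcast on C⃗(n;1,a). -/
def IsIndepBroadcast (n : ℕ) (a : ℤ) (f : ZMod n → ℕ) : Prop :=
  (∀ v, f v ≤ circEcc n a v) ∧
  ∀ u v : ZMod n, u ≠ v → 0 < f u → 0 < f v → f u < circDist n a u v

/-- Cost of a broadcast: sum of its values over all vertices. -/
def circCost (n : ℕ) (f : ZMod n → ℕ) : ℕ :=
  ∑ i ∈ Finset.range n, f (i : ZMod n)

/-- The broadcast independence number of C⃗(n;1,a). -/
noncomputable def betaB (n : ℕ) (a : ℤ) : ℕ :=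
  sSup {c | ∃ f : ZMod n → ℕ, IsIndepBroadcast n a f ∧ c = circCost n f}


/-- piecewise distance function -/
def dvv (a m : ℕ) : ℕ := if m < a then m else if m < 2*a then m - a + 1 else m - 2*a + 2

lemma dvv_le_self {a : ℕ} (ha : 1 ≤ a) (m : ℕ) : dvv a m ≤ m := by
  unfold dvv; split_ifs <;> omega

lemma dvv_le_a {a m : ℕ} (ha : 4 ≤ a) (hm : m < 3*a - 1) : dvv a m ≤ a := by
  unfold dvv; split_ifs <;> omega

lemma dvv_two_le {a m : ℕ} (ha : 4 ≤ a) (hm : m < 3*a-1) (h0 : m ≠ 0) (h1 : m ≠ 1)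
    (h2 : m ≠ a) : 2 ≤ dvv a m := by
  unfold dvv; split_ifs <;> omega

lemma dvv_three_le {a m : ℕ} (ha : 4 ≤ a) (hm : m < 3*a-1) (h0 : m ≠ 0) (h1 : m ≠ 1)
    (h2 : m ≠ 2) (h3 : m ≠ a) (h4 : m ≠ a+1) (h5 : m ≠ 2*a) : 3 ≤ dvv a m := by
  unfold dvv; split_ifs <;> omega

lemma mod_cases {n m : ℕ} (hn : 0 < n) (hm : m < 2*n) :
    (m < n ∧ m % n = m) ∨ (n ≤ m ∧ m % n = m - n) := by
  rcases lt_or_ge m n with h | h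
  · exact Or.inl ⟨h, Nat.mod_eq_of_lt h⟩
  · exact Or.inr ⟨h, by rw [Nat.mod_eq_sub_mod h, Nat.mod_eq_of_lt (by omega)]⟩

lemma step_one {a M : ℕ} (ha : 4 ≤ a) (hM : M < 3*a-1) :
    dvv a ((M+1) % (3*a-1)) ≤ dvv a M + 1 := by
  rcases mod_cases (n := 3*a-1) (m := M+1) (by omega) (by omega) with ⟨h1, h2⟩ | ⟨h1, h2⟩ <;>
    rw [h2] <;> unfold dvv <;> split_ifs <;> omega

lemma step_a {a M : ℕ} (ha : 4 ≤ a) (hM : M < 3*a-1) :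
    dvv a ((M+a) % (3*a-1)) ≤ dvv a M + 1 := by
  rcases mod_cases (n := 3*a-1) (m := M+a) (by omega) (by omega) with ⟨h1, h2⟩ | ⟨h1, h2⟩ <;>
    rw [h2] <;> unfold dvv <;> split_ifs <;> omega

lemma dvv_le_steps {a : ℕ} (ha : 4 ≤ a) : ∀ x y : ℕ, dvv a ((x + y * a) % (3*a-1)) ≤ x + y := by
  intro x
  induction x with
  | zero =>
    intro y
    induction y with
    | zero => simpa [dvv] using by omega
    | succ y ih =>
      have h1 : (0 + (y+1) * a) % (3*a-1) = ((0 + y*a) % (3*a-1) + a) % (3*a-1) := by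
        rw [show 0 + (y+1)*a = (0 + y*a) + a by ring, Nat.add_mod,
          Nat.mod_eq_of_lt (show a < 3*a-1 by omega)]
      rw [h1]
      have := step_a (M := (0 + y*a) % (3*a-1)) ha (Nat.mod_lt _ (by omega))
      omega
  | succ x ih =>
    intro y
    have h1 : (x + 1 + y * a) % (3*a-1) = ((x + y*a) % (3*a-1) + 1) % (3*a-1) := by
      rw [show x + 1 + y*a = (x + y*a) + 1 by ring, Nat.add_mod,
        Nat.mod_eq_of_lt (show 1 < 3*a-1 by omega)]
    rw [h1]
    have := step_one (M := (x + y*a) % (3*a-1)) ha (Nat.mod_lt _ (by omega))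
    have := ih y
    omega

lemma steps_iff {n a : ℕ} (u v : ZMod n) (k : ℕ) :
    circSteps n (a : ℤ) u v k ↔
      ∃ x y : ℕ, x + y = k ∧ v = u + (x : ZMod n) + (y : ZMod n) * (a : ZMod n) := by
  have acast : (((a : ℕ) : ℤ) : ZMod n) = ((a : ℕ) : ZMod n) := by push_cast; ring
  constructor
  · intro h
    induction k generalizing v with
    | zero =>
      obtain ⟨g, h0, hk, _⟩ := h
      exact ⟨0, 0, rfl, by rw [← hk, h0]; simp⟩
    | succ k ih =>
      obtain ⟨g, h0, hk, harc⟩ := h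
      obtain ⟨x, y, hxy, hg⟩ := ih (g k) ⟨g, h0, rfl, fun i hi => harc i (by omega)⟩
      rcases harc k (by omega) with h | h
      · exact ⟨x+1, y, by omega, by rw [← hk, h, hg]; push_cast; ring⟩
      · refine ⟨x, y+1, by omega, ?_⟩
        rw [← hk, h, hg, acast]; push_cast; ring
  · rintro ⟨x, y, hxy, hv⟩
    refine ⟨fun i => u + ((min i x : ℕ) : ZMod n) + (((i - x : ℕ)) : ZMod n) * ((a:ℕ) : ZMod n),
      by simp, ?_, ?_⟩
    · show u + ((min k x : ℕ) : ZMod n) + (((k - x : ℕ)) : ZMod n) * ((a:ℕ) : ZMod n) = _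
      rw [hv, show min k x = x by omega, show k - x = y by omega]
    · intro i hi
      unfold circArc
      by_cases h : i < x
      · left
        show u + ((min (i+1) x : ℕ) : ZMod n) + ((((i+1) - x : ℕ)) : ZMod n) * ((a:ℕ) : ZMod n)
          = u + ((min i x : ℕ) : ZMod n) + (((i - x : ℕ)) : ZMod n) * ((a:ℕ) : ZMod n) + 1
        rw [show min (i+1) x = min i x + 1 by omega, show (i+1) - x = i - x by omega]
        push_cast; ring
      · right
        rw [acast]
        show u + ((min (i+1) x : ℕ) : ZMod n) + ((((i+1) - x : ℕ)) : ZMod n) * ((a:ℕ) : ZMod n)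
          = u + ((min i x : ℕ) : ZMod n) + (((i - x : ℕ)) : ZMod n) * ((a:ℕ) : ZMod n) + ((a:ℕ) : ZMod n)
        rw [show min (i+1) x = min i x by omega, show (i+1) - x = (i - x) + 1 by omega]
        push_cast; ring

lemma circDist_eq {a n : ℕ} (ha : 4 ≤ a) (hn : n = 3*a - 1) (u v : ZMod n) :
    circDist n (a : ℤ) u v = dvv a ((v - u).val) := by
  haveI : NeZero n := ⟨by omega⟩
  set m := (v - u).val with hmdef
  have hmn : m < n := ZMod.val_lt _
  have hcast : ((m : ℕ) : ZMod n) = v - u := ZMod.natCast_rightInverse _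
  have key : ∀ x y : ℕ, x + y * a = m → v = u + (x : ZMod n) + (y : ZMod n) * (a : ZMod n) := by
    intro x y h
    have h2 : ((x + y * a : ℕ) : ZMod n) = v - u := by rw [h]; exact hcast
    push_cast at h2
    linear_combination -h2
  have hset : {k | circSteps n (a:ℤ) u v k}
      = {k | ∃ x y : ℕ, x + y = k ∧ v = u + (x : ZMod n) + (y : ZMod n) * (a : ZMod n)} := by
    ext k; exact steps_iff u v k
  have hmem : dvv a m ∈ {k | ∃ x y : ℕ, x + y = k ∧
      v = u + (x : ZMod n) + (y : ZMod n) * (a : ZMod n)} := by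
    by_cases h1 : m < a
    · exact ⟨m, 0, by unfold dvv; split_ifs <;> omega, key m 0 (by omega)⟩
    · by_cases h2 : m < 2*a
      · exact ⟨m - a, 1, by unfold dvv; split_ifs <;> omega, key (m-a) 1 (by omega)⟩
      · exact ⟨m - 2*a, 2, by unfold dvv; split_ifs <;> omega, key (m-2*a) 2 (by omega)⟩
  unfold circDist
  rw [hset]
  apply le_antisymm
  · exact Nat.sInf_le hmem
  · apply le_csInf ⟨dvv a m, hmem⟩
    rintro k ⟨x, y, hxy, hv⟩
    have h2 : ((x + y * a : ℕ) : ZMod n) = ((m : ℕ) : ZMod n) := by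
      rw [hcast]; push_cast; linear_combination hv.symm
    have h3 : (x + y * a) % n = m := by
      have := (ZMod.natCast_eq_natCast_iff' _ _ _).mp h2
      rwa [Nat.mod_eq_of_lt hmn] at this
    have := dvv_le_steps ha x y
    rw [← hn, h3] at this
    omega

lemma circEcc_eq {a n : ℕ} (ha : 4 ≤ a) (hn : n = 3*a - 1) (u : ZMod n) :
    circEcc n (a : ℤ) u = a := by
  haveI : NeZero n := ⟨by omega⟩
  have hub : ∀ d ∈ {d | ∃ v, d = circDist n (a:ℤ) u v}, d ≤ a := by
    rintro d ⟨v, rfl⟩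
    rw [circDist_eq ha hn]
    exact dvv_le_a ha (by rw [← hn]; exact ZMod.val_lt _)
  apply le_antisymm
  · exact csSup_le ⟨circDist n (a:ℤ) u u, ⟨u, rfl⟩⟩ hub
  · apply le_csSup ⟨a, hub⟩
    refine ⟨u + ((2*a-1 : ℕ) : ZMod n), ?_⟩
    rw [circDist_eq ha hn, add_sub_cancel_left, ZMod.val_cast_of_lt (by omega)]
    unfold dvv; split_ifs <;> omega

lemma val_sub {n : ℕ} [NeZero n] (x y : ZMod n) :
    (y - x).val = (y.val + (n - x.val)) % n := by
  have h1 : ((y.val : ℕ) : ZMod n) = y := ZMod.natCast_rightInverse _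
  have h2 : ((x.val : ℕ) : ZMod n) = x := ZMod.natCast_rightInverse _
  have h3 : ((y.val + (n - x.val) : ℕ) : ZMod n) = y - x := by
    push_cast [Nat.cast_sub (ZMod.val_lt x).le, h1, h2, ZMod.natCast_self]
    ring
  rw [← h3, ZMod.val_natCast]

lemma val_three {a n : ℕ} (ha : 4 ≤ a) (hn : n = 3*a - 1) (w : ZMod n) (hw : w ≠ 0) :
    3 * dvv a w.val ≤ (3 * w).val + 4 := by
  haveI : NeZero n := ⟨by omega⟩
  set m := w.val with hm
  have hm1 : m ≠ 0 := fun h => hw ((ZMod.val_eq_zero w).mp h)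
  have hmn : m < n := ZMod.val_lt _
  have hcast : ((m : ℕ) : ZMod n) = w := ZMod.natCast_rightInverse _
  have h3 : (3 * w) = ((3 * m : ℕ) : ZMod n) := by push_cast [hcast]; ring
  rw [h3, ZMod.val_natCast]
  subst hn
  by_cases h1 : m < a
  · rw [Nat.mod_eq_of_lt (by omega)]
    unfold dvv; split_ifs <;> omega
  · by_cases h2 : m < 2*a
    · rw [Nat.mod_eq_sub_mod (by omega), Nat.mod_eq_of_lt (by omega)]
      unfold dvv; split_ifs <;> omega
    · rw [Nat.mod_eq_sub_mod (by omega), Nat.mod_eq_sub_mod (by omega),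
        Nat.mod_eq_of_lt (by omega)]
      unfold dvv; split_ifs <;> omega

open Finset

lemma cost_eq_sum_univ {n : ℕ} [NeZero n] (f : ZMod n → ℕ) :
    circCost n f = ∑ v : ZMod n, f v := by
  have hinj : Set.InjOn (fun i : ℕ => (i : ZMod n)) (range n) := by
    intro i hi j hj h
    have h' : ((i : ZMod n)) = (j : ZMod n) := h
    rw [← ZMod.val_cast_of_lt (mem_range.mp (Finset.mem_coe.mp hi)),
      ← ZMod.val_cast_of_lt (mem_range.mp (Finset.mem_coe.mp hj)), h']
  have himg : (range n).image (fun i : ℕ => (i : ZMod n)) = univ := by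
    apply Finset.eq_univ_of_card
    rw [Finset.card_image_of_injOn hinj, card_range, ZMod.card]
  calc circCost n f = ∑ v ∈ (range n).image (fun i : ℕ => (i : ZMod n)), f v :=
        (Finset.sum_image (fun i hi j hj h => hinj hi hj h)).symm
    _ = ∑ v : ZMod n, f v := by rw [himg]

lemma upper_bound {a n : ℕ} (ha : 4 ≤ a) (hn : n = 3*a - 1) (f : ZMod n → ℕ)
    (hf : IsIndepBroadcast n (a : ℤ) f) : circCost n f ≤ n / 2 := by
  classical
  haveI : NeZero n := ⟨by omega⟩
  have hecc : ∀ v, f v ≤ a := fun v => by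
    have := hf.1 v; rwa [circEcc_eq ha hn] at this
  have hdist : ∀ u v : ZMod n, u ≠ v → 0 < f u → 0 < f v →
      f u < dvv a ((v - u).val) := by
    intro u v h h1 h2
    have := hf.2 u v h h1 h2
    rwa [circDist_eq ha hn] at this
  set S : Finset (ZMod n) := Finset.univ.filter (fun v => 0 < f v) with hSdef
  have hSmem : ∀ u, u ∈ S ↔ 0 < f u := by intro u; simp [hSdef]
  have hcost : circCost n f = ∑ u ∈ S, f u := by
    rw [cost_eq_sum_univ]
    exact (Finset.sum_filter_of_ne (fun x _ hx => by omega)).symm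
  -- family I : intervals [u, u + f u]
  set II : ZMod n → Finset (ZMod n) :=
    fun u => (range (f u + 1)).image (fun j : ℕ => u + (j : ZMod n)) with hIIdef
  have hIcard : ∀ u ∈ S, (II u).card = f u + 1 := by
    intro u hu
    rw [hIIdef]
    rw [Finset.card_image_of_injOn, card_range]
    intro j hj j' hj' h
    simp only [mem_coe, mem_range] at hj hj'
    have h2 : ((j:ℕ) : ZMod n) = ((j':ℕ) : ZMod n) := by
      have := add_left_cancel h
      exact this
    rw [← ZMod.val_cast_of_lt (show j < n by have := hecc u; omega),
      ← ZMod.val_cast_of_lt (show j' < n by have := hecc u; omega), h2]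
  have hIdisj : ∀ u ∈ S, ∀ v ∈ S, u ≠ v → Disjoint (II u) (II v) := by
    intro u hu v hv huv
    rw [Finset.disjoint_left]
    intro z hz hz'
    rw [hIIdef] at hz hz'
    simp only [Finset.mem_image, mem_range] at hz hz'
    obtain ⟨j, hj, hzj⟩ := hz
    obtain ⟨j', hj', hzj'⟩ := hz'
    have heq : u + (j : ZMod n) = v + (j' : ZMod n) := by rw [hzj, hzj']
    rcases lt_trichotomy j j' with h | h | h
    · -- u - v = j' - j
      have h1 : u - v = ((j' - j : ℕ) : ZMod n) := by
        rw [Nat.cast_sub h.le]; linear_combination heq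
      have h2 : (u - v).val = j' - j := by
        rw [h1, ZMod.val_cast_of_lt (show j' - j < n by have := hecc v; omega)]
      have h3 := hdist v u huv.symm ((hSmem v).mp hv) ((hSmem u).mp hu)
      have h4 := dvv_le_self (show 1 ≤ a by omega) ((u - v).val)
      omega
    · exact huv (by have : (j : ZMod n) = (j' : ZMod n) := by rw [h]
                    rw [this] at heq; exact add_right_cancel heq)
    · have h1 : v - u = ((j - j' : ℕ) : ZMod n) := by
        rw [Nat.cast_sub h.le]; linear_combination -heq
      have h2 : (v - u).val = j - j' := by
        rw [h1, ZMod.val_cast_of_lt (show j - j' < n by have := hecc u; omega)]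
      have h3 := hdist u v huv ((hSmem u).mp hu) ((hSmem v).mp hv)
      have h4 := dvv_le_self (show 1 ≤ a by omega) ((v - u).val)
      omega
  have hIsum : ∑ u ∈ S, (f u + 1) ≤ n := by
    calc ∑ u ∈ S, (f u + 1) = ∑ u ∈ S, (II u).card := by
          exact Finset.sum_congr rfl (fun u hu => (hIcard u hu).symm)
      _ = (S.biUnion II).card := (Finset.card_biUnion hIdisj).symm
      _ ≤ Fintype.card (ZMod n) := Finset.card_le_univ _
      _ = n := ZMod.card n
  -- family J : intervals [3u, 3u + 3 f u - 2]
  set JJ : ZMod n → Finset (ZMod n) :=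
    fun u => (range (3 * f u - 1)).image (fun j : ℕ => 3 * u + (j : ZMod n)) with hJJdef
  have hJcard : ∀ u ∈ S, (JJ u).card = 3 * f u - 1 := by
    intro u hu
    rw [hJJdef]
    rw [Finset.card_image_of_injOn, card_range]
    intro j hj j' hj' h
    simp only [mem_coe, mem_range] at hj hj'
    have h2 : ((j:ℕ) : ZMod n) = ((j':ℕ) : ZMod n) := add_left_cancel h
    rw [← ZMod.val_cast_of_lt (show j < n by have := hecc u; omega),
      ← ZMod.val_cast_of_lt (show j' < n by have := hecc u; omega), h2]
  have hJdisj : ∀ u ∈ S, ∀ v ∈ S, u ≠ v → Disjoint (JJ u) (JJ v) := by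
    intro u hu v hv huv
    rw [Finset.disjoint_left]
    intro z hz hz'
    rw [hJJdef] at hz hz'
    simp only [Finset.mem_image, mem_range] at hz hz'
    obtain ⟨j, hj, hzj⟩ := hz
    obtain ⟨j', hj', hzj'⟩ := hz'
    have heq : 3 * u + (j : ZMod n) = 3 * v + (j' : ZMod n) := by rw [hzj, hzj']
    have hvu : v - u ≠ 0 := sub_ne_zero.mpr huv.symm
    have huv' : u - v ≠ 0 := sub_ne_zero.mpr huv
    have hfu := hdist u v huv ((hSmem u).mp hu) ((hSmem v).mp hv)
    have hfv := hdist v u huv.symm ((hSmem v).mp hv) ((hSmem u).mp hu)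
    rcases lt_trichotomy j j' with h | h | h
    · have h1 : 3 * (u - v) = ((j' - j : ℕ) : ZMod n) := by
        rw [Nat.cast_sub h.le]; linear_combination heq
      have h2 : (3 * (u - v)).val = j' - j := by
        rw [h1, ZMod.val_cast_of_lt (show j' - j < n by have := hecc v; omega)]
      have h3 := val_three ha hn (u - v) huv'
      omega
    · have h0 : (j : ZMod n) = (j' : ZMod n) := by rw [h]
      rw [h0] at heq
      have h1 : 3 * (u - v) = 0 := by
        have := add_right_cancel heq
        linear_combination this
      have h2 : (3 * (u - v)).val = 0 := by rw [h1, ZMod.val_zero]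
      have h3 := val_three ha hn (u - v) huv'
      have h4 := dvv_two_le (m := (u - v).val) ha
      omega
    · have h1 : 3 * (v - u) = ((j - j' : ℕ) : ZMod n) := by
        rw [Nat.cast_sub h.le]; linear_combination -heq
      have h2 : (3 * (v - u)).val = j - j' := by
        rw [h1, ZMod.val_cast_of_lt (show j - j' < n by have := hecc u; omega)]
      have h3 := val_three ha hn (v - u) hvu
      omega
  have hJsum : ∑ u ∈ S, (3 * f u - 1) ≤ n := by
    calc ∑ u ∈ S, (3 * f u - 1) = ∑ u ∈ S, (JJ u).card :=
          Finset.sum_congr rfl (fun u hu => (hJcard u hu).symm)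
      _ = (S.biUnion JJ).card := (Finset.card_biUnion hJdisj).symm
      _ ≤ Fintype.card (ZMod n) := Finset.card_le_univ _
      _ = n := ZMod.card n
  -- combine
  have h1 : ∑ u ∈ S, (f u + 1) = (∑ u ∈ S, f u) + S.card := by
    rw [Finset.sum_add_distrib, Finset.sum_const, smul_eq_mul, mul_one]
  have h2 : ∑ u ∈ S, 3 * f u = (∑ u ∈ S, (3 * f u - 1)) + S.card := by
    have hc : ∀ u ∈ S, 3 * f u = (3 * f u - 1) + 1 := fun u hu => by
      have := (hSmem u).mp hu; omega
    rw [Finset.sum_congr rfl hc, Finset.sum_add_distrib, Finset.sum_const, smul_eq_mul, mul_one]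
  have h3 : ∑ u ∈ S, 3 * f u = 3 * ∑ u ∈ S, f u := by rw [Finset.mul_sum]
  rw [hcost]
  omega

lemma cnt (p l r : ℕ) (hp : p ≤ 1) (N : ℕ) :
    ∑ i ∈ range N, (if (i % 2 = p ∧ l ≤ i ∧ i ≤ r) then (1:ℕ) else 0)
      = (max l (min N (r+1)) + 1 - p)/2 - (l + 1 - p)/2 := by
  induction N with
  | zero => simp only [range_zero, sum_empty]; omega
  | succ N ih => rw [Finset.sum_range_succ, ih]; split_ifs with h <;> omega

def oddF (n a : ℕ) : ZMod n → ℕ := fun x => if x.val % 2 = 0 then 1 else 0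

def evenF (n a : ℕ) : ZMod n → ℕ := fun x =>
  if x.val % 2 = 0 ∧ x.val ≤ a - 2 then (if x.val = a - 2 then 2 else 1)
  else if x.val % 2 = 1 ∧ a + 1 ≤ x.val ∧ x.val ≤ 2*a - 3 then 1
  else if x.val % 2 = 0 ∧ 2*a ≤ x.val ∧ x.val ≤ 3*a - 4 then 1 else 0

set_option maxHeartbeats 1000000 in
lemma lower_bound {a n : ℕ} (ha : 4 ≤ a) (hn : n = 3*a - 1) :
    ∃ f : ZMod n → ℕ, IsIndepBroadcast n (a:ℤ) f ∧ n / 2 ≤ circCost n f := by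
  haveI : NeZero n := ⟨by omega⟩
  by_cases hpar : a % 2 = 1
  · -- a odd
    refine ⟨oddF n a, ⟨?_, ?_⟩, ?_⟩
    · intro v; rw [circEcc_eq ha hn]; simp only [oddF]; split_ifs <;> omega
    · intro u v huv h1 h2
      simp only [oddF] at h1 h2
      have hu : u.val % 2 = 0 := by by_contra h; simp [h] at h1
      have hv : v.val % 2 = 0 := by by_contra h; simp [h] at h2
      have hβn : u.val < n := ZMod.val_lt u
      have hγn : v.val < n := ZMod.val_lt v
      have hm := val_sub u v
      have hm0 : (v - u).val ≠ 0 := fun h =>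
        huv (sub_eq_zero.mp ((ZMod.val_eq_zero _).mp h)).symm
      have hmlt : (v - u).val < 3*a - 1 := by rw [← hn]; exact ZMod.val_lt _
      have key : (v - u).val ≠ 1 ∧ (v - u).val ≠ a := by
        rcases mod_cases (show 0 < n by omega)
          (show v.val + (n - u.val) < 2*n by omega) with ⟨hs1, hs2⟩ | ⟨hs1, hs2⟩ <;>
          rw [hm, hs2] <;> omega
      rw [circDist_eq ha hn]
      have := dvv_two_le ha hmlt hm0 key.1 key.2
      simp only [oddF, if_pos hu]
      omega
    · have hce : circCost n (oddF n a)
          = ∑ i ∈ range n, (if (i % 2 = 0 ∧ 0 ≤ i ∧ i ≤ n) then (1:ℕ) else 0) := by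
        unfold circCost
        apply Finset.sum_congr rfl
        intro i hi
        have hi' := mem_range.mp hi
        simp only [oddF, ZMod.val_cast_of_lt hi']
        split_ifs <;> omega
      rw [hce, cnt 0 0 n (by omega) n]
      omega
  · -- a even
    refine ⟨evenF n a, ⟨?_, ?_⟩, ?_⟩
    · intro v; rw [circEcc_eq ha hn]; simp only [evenF]; split_ifs <;> omega
    · intro u v huv h1 h2
      have hβn : u.val < n := ZMod.val_lt u
      have hγn : v.val < n := ZMod.val_lt v
      have hm := val_sub u v
      have hm0 : (v - u).val ≠ 0 := fun h =>
        huv (sub_eq_zero.mp ((ZMod.val_eq_zero _).mp h)).symm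
      have hmlt : (v - u).val < 3*a - 1 := by rw [← hn]; exact ZMod.val_lt _
      have hPu : (u.val % 2 = 0 ∧ u.val ≤ a-2) ∨ (u.val % 2 = 1 ∧ a+1 ≤ u.val ∧ u.val ≤ 2*a-3)
          ∨ (u.val % 2 = 0 ∧ 2*a ≤ u.val ∧ u.val ≤ 3*a-4) := by
        simp only [evenF] at h1
        split_ifs at h1 with c1 c2 c3 <;> first
          | exact Or.inl c1
          | exact Or.inr (Or.inl c2)
          | exact Or.inr (Or.inr c3)
          | omega
      have hPv : (v.val % 2 = 0 ∧ v.val ≤ a-2) ∨ (v.val % 2 = 1 ∧ a+1 ≤ v.val ∧ v.val ≤ 2*a-3)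
          ∨ (v.val % 2 = 0 ∧ 2*a ≤ v.val ∧ v.val ≤ 3*a-4) := by
        simp only [evenF] at h2
        split_ifs at h2 with c1 c2 c3 <;> first
          | exact Or.inl c1
          | exact Or.inr (Or.inl c2)
          | exact Or.inr (Or.inr c3)
          | omega
      have hfu : evenF n a u = 1 ∨ (evenF n a u = 2 ∧ u.val = a-2) := by
        simp only [evenF] at h1 ⊢
        split_ifs at h1 ⊢ with c1 c2 c3 c4 <;> omega
      have key : ((v - u).val ≠ 1 ∧ (v - u).val ≠ a) ∧
          (u.val = a - 2 → ((v - u).val ≠ 2 ∧ (v - u).val ≠ a+1 ∧ (v - u).val ≠ 2*a)) := by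
        rcases mod_cases (show 0 < n by omega)
          (show v.val + (n - u.val) < 2*n by omega) with ⟨hs1, hs2⟩ | ⟨hs1, hs2⟩ <;>
          rw [hm, hs2] <;> omega
      rw [circDist_eq ha hn]
      rcases hfu with h | ⟨h, hval⟩
      · rw [h]
        have := dvv_two_le ha hmlt hm0 key.1.1 key.1.2
        omega
      · rw [h]
        have hk := key.2 hval
        have := dvv_three_le ha hmlt hm0 key.1.1 hk.1 key.1.2 hk.2.1 hk.2.2
        omega
    · have hce : circCost n (evenF n a) =
          ∑ i ∈ range n, ((if (i % 2 = 0 ∧ 0 ≤ i ∧ i ≤ a-2) then (1:ℕ) else 0)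
            + (if (i % 2 = 1 ∧ a+1 ≤ i ∧ i ≤ 2*a-3) then (1:ℕ) else 0)
            + (if (i % 2 = 0 ∧ 2*a ≤ i ∧ i ≤ 3*a-4) then (1:ℕ) else 0)
            + (if (i % 2 = 0 ∧ a-2 ≤ i ∧ i ≤ a-2) then (1:ℕ) else 0)) := by
        unfold circCost
        apply Finset.sum_congr rfl
        intro i hi
        have hi' := mem_range.mp hi
        simp only [evenF, ZMod.val_cast_of_lt hi']
        split_ifs <;> omega
      rw [hce, Finset.sum_add_distrib, Finset.sum_add_distrib, Finset.sum_add_distrib,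
        cnt 0 0 (a-2) (by omega) n, cnt 1 (a+1) (2*a-3) (by omega) n,
        cnt 0 (2*a) (3*a-4) (by omega) n, cnt 0 (a-2) (a-2) (by omega) n]
      omega


theorem stmt3 (n a : ℕ) (ha : 4 ≤ a) (hn : n = 3 * a - 1) :
    betaB n (a : ℤ) = n / 2 := by
  haveI : NeZero n := ⟨by omega⟩
  have hn' : n = 3*a - 1 := hn
  unfold betaB
  have hbdd : BddAbove {c | ∃ f : ZMod n → ℕ, IsIndepBroadcast n (↑a) f ∧ c = circCost n f} := by
    refine ⟨n * a, ?_⟩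
    rintro c ⟨f, hf, rfl⟩
    have hfa : ∀ v, f v ≤ a := fun v => by
      have := hf.1 v; rwa [circEcc_eq ha hn'] at this
    calc circCost n f = ∑ i ∈ range n, f ↑i := rfl
      _ ≤ ∑ _i ∈ range n, a := Finset.sum_le_sum (fun i _ => hfa _)
      _ = n * a := by rw [Finset.sum_const, card_range, smul_eq_mul]
  apply le_antisymm
  · apply csSup_le
    · exact ⟨0, fun _ => 0, ⟨fun v => Nat.zero_le _, fun u v h h1 h2 => by simp at h1⟩,
        by simp [circCost]⟩
    · rintro c ⟨f, hf, rfl⟩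
      exact upper_bound ha hn' f hf
  · obtain ⟨f, hf, hge⟩ := lower_bound ha hn'
    exact hge.trans (le_csSup hbdd ⟨f, hf, rfl⟩)
end

section
/- For every integer n ≥ 4, the broadcast independence number of the oriented circulant graph C⃗(n;1,3) equals ⌊n/2⌋. -/
set_option linter.unusedSectionVars false
section Aux

variable {n : ℕ}

lemma steps_of (u : ZMod n) (x y : ℕ) : circSteps n 3 u (u + x + 3 * y) (x + y) := by
  refine ⟨fun i => u + (min i x : ℕ) + 3 * ((i - x : ℕ) : ZMod n), ?_, ?_, ?_⟩
  · simp
  · simp only [min_eq_right (Nat.le_add_right x y), Nat.add_sub_cancel_left]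
  · intro i hi
    by_cases h : i < x
    · left
      simp only [min_eq_left h.le, min_eq_left (show i + 1 ≤ x from h), Nat.sub_eq_zero_of_le h.le,
        Nat.sub_eq_zero_of_le (show i + 1 ≤ x from h)]
      push_cast
      ring
    · right
      simp only [min_eq_right (le_of_not_gt h), min_eq_right (by omega : x ≤ i + 1),
        (by omega : i + 1 - x = (i - x) + 1)]
      push_cast
      ring

lemma steps_linear {u v : ZMod n} {k : ℕ} (h : circSteps n 3 u v k) :
    ∃ x y : ℕ, x + y = k ∧ v = u + x + 3 * y := by
  induction k generalizing v with
  | zero =>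
      obtain ⟨g, h0, hk, _⟩ := h
      exact ⟨0, 0, rfl, by simp [← hk, h0]⟩
  | succ k ih =>
      obtain ⟨g, h0, hk, harc⟩ := h
      obtain ⟨x, y, hxy, hgk⟩ := ih ⟨g, h0, rfl, fun i hi => harc i (by omega)⟩
      rcases harc k (by omega) with h1 | h3
      · refine ⟨x + 1, y, by omega, ?_⟩
        rw [← hk, h1, hgk]; push_cast; ring
      · refine ⟨x, y + 1, by omega, ?_⟩
        rw [← hk, h3, hgk]; push_cast; ring

variable [NeZero n]

lemma natCast_val_self (v : ZMod n) : ((v.val : ℕ) : ZMod n) = v := by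
  simp [ZMod.natCast_val, ZMod.cast_id]

lemma steps_self (u v : ZMod n) : circSteps n 3 u v ((v - u).val) := by
  have h := steps_of u ((v - u).val) 0
  simpa [natCast_val_self] using h

lemma dist_spec (u v : ZMod n) :
    ∃ x y : ℕ, x + y = circDist n 3 u v ∧ v = u + x + 3 * y := by
  have h : circSteps n 3 u v (circDist n 3 u v) :=
    Nat.sInf_mem (⟨_, steps_self u v⟩ : Set.Nonempty {k | circSteps n 3 u v k})
  exact steps_linear h

lemma dist_le {u v : ZMod n} (x y : ℕ) (h : v = u + x + 3 * y) :
    circDist n 3 u v ≤ x + y :=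
  Nat.sInf_le (show circSteps n 3 u v (x + y) by rw [h]; exact steps_of u x y)

lemma val_eq_of {u v : ZMod n} {x y : ℕ} (h : v = u + x + 3 * y) :
    (v - u).val = (x + 3 * y) % n := by
  have h2 : v - u = ((x + 3 * y : ℕ) : ZMod n) := by rw [h]; push_cast; ring
  rw [h2, ZMod.val_natCast]

lemma dist_le_of_mod {u v : ZMod n} {x y : ℕ} (h : (x + 3 * y) % n = (v - u).val) :
    circDist n 3 u v ≤ x + y := by
  apply dist_le x y
  have h2 : ((x + 3 * y : ℕ) : ZMod n) = v - u := by
    conv_lhs => rw [← Nat.mod_add_div (x + 3 * y) n]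
    push_cast [h, natCast_val_self, ZMod.natCast_self]
    ring
  have h3 : v - u = (x : ZMod n) + 3 * y := by rw [← h2]; push_cast; ring
  linear_combination h3

lemma dist_ge {u v : ZMod n} {C : ℕ}
    (H : ∀ x y : ℕ, x + y < C → (x + 3 * y) % n ≠ (v - u).val) :
    C ≤ circDist n 3 u v := by
  by_contra hlt
  push_neg at hlt
  obtain ⟨x, y, hxy, h⟩ := dist_spec u v
  exact H x y (by omega) (val_eq_of h).symm

lemma dist_ge_two (hn : 4 ≤ n) {u v : ZMod n}
    (h0 : (v - u).val ≠ 0) (h1 : (v - u).val ≠ 1) (h3 : (v - u).val ≠ 3) :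
    2 ≤ circDist n 3 u v := by
  apply dist_ge
  intro x y hxy
  have hx : x + 3 * y = 0 ∨ x + 3 * y = 1 ∨ x + 3 * y = 3 := by omega
  rcases hx with h | h | h <;> rw [h, Nat.mod_eq_of_lt (by omega)] <;> omega

lemma dist_ge_three (hn : 7 ≤ n) {u v : ZMod n}
    (h0 : (v - u).val ≠ 0) (h1 : (v - u).val ≠ 1) (h2 : (v - u).val ≠ 2)
    (h3 : (v - u).val ≠ 3) (h4 : (v - u).val ≠ 4) (h6 : (v - u).val ≠ 6) :
    3 ≤ circDist n 3 u v := by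
  apply dist_ge
  intro x y hxy
  have hx : x + 3 * y = 0 ∨ x + 3 * y = 1 ∨ x + 3 * y = 2 ∨ x + 3 * y = 3 ∨
      x + 3 * y = 4 ∨ x + 3 * y = 6 := by omega
  rcases hx with h | h | h | h | h | h <;> rw [h, Nat.mod_eq_of_lt (by omega)] <;> omega

lemma val_sub_ne_zero {u v : ZMod n} (h : u ≠ v) : (v - u).val ≠ 0 := fun h0 =>
  h (sub_eq_zero.mp ((ZMod.val_eq_zero _).mp h0)).symm

lemma dist_le_val (u v : ZMod n) : circDist n 3 u v ≤ (v - u).val := by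
  have h := dist_le (u := u) (v := v) ((v - u).val) 0
    (by rw [natCast_val_self]; simp)
  simpa using h

lemma ecc_bddAbove (u : ZMod n) : BddAbove {d | ∃ v, d = circDist n 3 u v} := by
  refine ⟨n, ?_⟩
  rintro d ⟨v, rfl⟩
  exact le_trans (dist_le_val u v) (le_of_lt (ZMod.val_lt _))

lemma dist_le_ecc (u v : ZMod n) : circDist n 3 u v ≤ circEcc n 3 u :=
  le_csSup (ecc_bddAbove u) ⟨v, rfl⟩

lemma ecc_le_half (hn : 4 ≤ n) (u : ZMod n) : circEcc n 3 u ≤ n / 2 := by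
  unfold circEcc
  refine csSup_le ⟨circDist n 3 u u, u, rfl⟩ ?_
  rintro d ⟨v, rfl⟩
  have hm : (v - u).val < n := ZMod.val_lt _
  have h := dist_le_of_mod (u := u) (v := v) (x := (v - u).val % 3)
    (y := (v - u).val / 3)
    (by rw [(by omega : (v - u).val % 3 + 3 * ((v - u).val / 3) = (v - u).val),
          Nat.mod_eq_of_lt hm])
  refine h.trans ?_
  omega

lemma val_inj' {u v : ZMod n} (h : u.val = v.val) : u = v := by
  rw [← natCast_val_self u, ← natCast_val_self v, h]

lemma m_eq (u v : ZMod n) :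
    (v - u).val = if u.val ≤ v.val then v.val - u.val else v.val + n - u.val := by
  have h1 : u.val < n := ZMod.val_lt u
  have h2 : v.val < n := ZMod.val_lt v
  have hneg : ((n - u.val : ℕ) : ZMod n) = - u := by
    have h3 : ((u.val + (n - u.val) : ℕ) : ZMod n) = 0 := by
      rw [(by omega : u.val + (n - u.val) = n)]; exact ZMod.natCast_self n
    push_cast [natCast_val_self] at h3
    linear_combination h3
  have key : v - u = ((v.val + (n - u.val) : ℕ) : ZMod n) := by
    push_cast [natCast_val_self, hneg]
    ring
  rw [key, ZMod.val_natCast]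
  split_ifs with h
  · rw [(by omega : v.val + (n - u.val) = n + (v.val - u.val)), Nat.add_mod_left,
      Nat.mod_eq_of_lt (by omega)]
  · rw [Nat.mod_eq_of_lt (by omega)]
    omega

lemma mod_cancel {N a b : ℕ} (h : a % N = b % N) (ha1 : 1 ≤ a) (ha : a ≤ N)
    (hb1 : 1 ≤ b) (hb : b ≤ N) : a = b := by
  rcases Nat.lt_or_ge a N with h1 | h1
  · rcases Nat.lt_or_ge b N with h2 | h2
    · rwa [Nat.mod_eq_of_lt h1, Nat.mod_eq_of_lt h2] at h
    · have hbN : b = N := le_antisymm hb h2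
      subst hbN
      rw [Nat.mod_eq_of_lt h1, Nat.mod_self] at h
      omega
  · have haN : a = N := le_antisymm ha h1
    rw [haN, Nat.mod_self] at h
    rcases Nat.lt_or_ge b N with h2 | h2
    · rw [Nat.mod_eq_of_lt h2] at h
      omega
    · omega

lemma cast_eq_mod {t s : ℕ} (h : (t : ZMod n) = (s : ZMod n)) : t % n = s % n := by
  have h2 := congrArg ZMod.val h
  rwa [ZMod.val_natCast, ZMod.val_natCast] at h2

lemma sum_range_eq_sum_univ (f : ZMod n → ℕ) :
    ∑ i ∈ Finset.range n, f (i : ZMod n) = ∑ v : ZMod n, f v := by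
  refine Finset.sum_nbij' (fun i => (i : ZMod n)) (fun v => v.val) ?_ ?_ ?_ ?_ ?_
  · intro a _; exact Finset.mem_univ _
  · intro v _; exact Finset.mem_range.mpr (ZMod.val_lt v)
  · intro a ha; exact ZMod.val_cast_of_lt (Finset.mem_range.mp ha)
  · intro v _; exact natCast_val_self v
  · intro a _; rfl

lemma cost_le_half (hn : 4 ≤ n) (f : ZMod n → ℕ) (hf : IsIndepBroadcast n 3 f) :
    circCost n f ≤ n / 2 := by
  have hfv : ∀ v, 2 * f v ≤ n := by
    intro v
    have h := (hf.1 v).trans (ecc_le_half hn v)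
    omega
  have key : ∀ u v : ZMod n, u ≠ v → 0 < f u → 0 < f v →
      ∀ t s : ℕ, 1 ≤ t → t ≤ 2 * f u → 1 ≤ s → s ≤ 2 * f v → s < t →
      u + (t : ZMod n) ≠ v + (s : ZMod n) := by
    intro u v huv hu hv t s ht1 ht2 hs1 hs2 hst heq
    have hvu : v = u + ((t - s : ℕ) : ZMod n) := by
      have h2 : ((t - s : ℕ) : ZMod n) = (t : ZMod n) - s := by
        push_cast [Nat.cast_sub hst.le]
        ring
      rw [h2]
      linear_combination -heq
    have hmlt : t - s < n := by have := hfv u; omega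
    have hm : (v - u).val = t - s := by
      rw [hvu]
      simp only [add_sub_cancel_left]
      exact ZMod.val_cast_of_lt hmlt
    have hd : circDist n 3 u v ≤ (t - s) % 3 + (t - s) / 3 := by
      apply dist_le_of_mod
      rw [(by omega : (t - s) % 3 + 3 * ((t - s) / 3) = t - s), Nat.mod_eq_of_lt hmlt, hm]
    have hind := hf.2 u v huv hu hv
    omega
  classical
  set S : Finset (ZMod n) := Finset.univ.filter (fun v => 0 < f v) with hS
  set A : ZMod n → Finset (ZMod n) :=
    fun v => (Finset.Icc 1 (2 * f v)).image (fun t : ℕ => v + (t : ZMod n)) with hA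
  have card_A : ∀ v, (A v).card = 2 * f v := by
    intro v
    rw [hA]
    rw [Finset.card_image_of_injOn]
    · rw [Nat.card_Icc]; omega
    · intro t ht s hs hts
      simp only [Finset.coe_Icc, Set.mem_Icc] at ht hs
      have h2 : (t : ZMod n) = (s : ZMod n) := by
        have := hts
        exact add_left_cancel this
      exact mod_cancel (cast_eq_mod h2) ht.1 (ht.2.trans (hfv v)) hs.1 (hs.2.trans (hfv v))
  have hdisj : ∀ u ∈ S, ∀ v ∈ S, u ≠ v → Disjoint (A u) (A v) := by
    intro u hu v hv huv
    have hu' : 0 < f u := (Finset.mem_filter.mp hu).2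
    have hv' : 0 < f v := (Finset.mem_filter.mp hv).2
    rw [Finset.disjoint_left]
    intro w hwu hwv
    rw [hA, Finset.mem_image] at hwu hwv
    obtain ⟨t, ht, hwt⟩ := hwu
    obtain ⟨s, hs, hws⟩ := hwv
    rw [Finset.mem_Icc] at ht hs
    have heq : u + (t : ZMod n) = v + (s : ZMod n) := by rw [hwt, hws]
    rcases lt_trichotomy t s with h | h | h
    · exact key v u huv.symm hv' hu' s t hs.1 hs.2 ht.1 ht.2 h heq.symm
    · subst h
      exact huv (by have := add_right_cancel heq; exact this)
    · exact key u v huv hu' hv' t s ht.1 ht.2 hs.1 hs.2 h heq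
  have hsum1 : ∑ v ∈ S, 2 * f v = (S.biUnion A).card := by
    rw [Finset.card_biUnion hdisj]
    exact Finset.sum_congr rfl fun v _ => (card_A v).symm
  have hle : (S.biUnion A).card ≤ n := by
    have h := Finset.card_le_univ (S.biUnion A)
    rwa [ZMod.card n] at h
  have hsum2 : ∑ v ∈ S, 2 * f v = 2 * ∑ v : ZMod n, f v := by
    rw [Finset.mul_sum]
    apply Finset.sum_subset (Finset.subset_univ S)
    intro x _ hx
    rw [hS, Finset.mem_filter] at hx
    have h0 : f x = 0 := by
      by_contra h
      exact hx ⟨Finset.mem_univ x, Nat.pos_of_ne_zero h⟩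
    omega
  have hcost : circCost n f = ∑ v : ZMod n, f v := sum_range_eq_sum_univ f
  omega

lemma betaB_bdd (hn : 4 ≤ n) :
    BddAbove {c | ∃ f : ZMod n → ℕ, IsIndepBroadcast n 3 f ∧ c = circCost n f} := by
  refine ⟨n / 2, ?_⟩
  rintro c ⟨f, hf, rfl⟩
  exact cost_le_half hn f hf

lemma betaB_le (hn : 4 ≤ n) : betaB n 3 ≤ n / 2 := by
  unfold betaB
  refine csSup_le ⟨0, fun _ => 0, ⟨fun v => Nat.zero_le _, fun u v _ h _ => absurd h (by simp)⟩,
    by simp [circCost]⟩ ?_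
  rintro c ⟨f, hf, rfl⟩
  exact cost_le_half hn f hf

lemma one_le_ecc (hn : 4 ≤ n) (u : ZMod n) : 1 ≤ circEcc n 3 u := by
  refine le_trans ?_ (dist_le_ecc u (u + 1))
  apply dist_ge
  intro x y hxy
  have hx : x = 0 ∧ y = 0 := by omega
  rw [hx.1, hx.2]
  simp only [add_sub_cancel_left, Nat.mul_zero, Nat.add_zero, Nat.zero_mod]
  intro h0
  have h1 : ((1 : ℕ) : ZMod n) = (1 : ZMod n) := Nat.cast_one
  have := ZMod.val_cast_of_lt (show 1 < n by omega)
  rw [h1] at this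
  omega

lemma two_le_ecc (hn : 5 ≤ n) (u : ZMod n) : 2 ≤ circEcc n 3 u := by
  refine le_trans ?_ (dist_le_ecc u (u + 2))
  have hval : ((u + 2) - u).val = 2 := by
    simp only [add_sub_cancel_left]
    have h1 : ((2 : ℕ) : ZMod n) = (2 : ZMod n) := by push_cast; rfl
    rw [← h1]
    exact ZMod.val_cast_of_lt (by omega)
  apply dist_ge_two (by omega) <;> rw [hval] <;> omega

lemma even_count (N : ℕ) :
    (∑ i ∈ Finset.range N, if i % 2 = 0 then 1 else 0) = (N + 1) / 2 := by
  induction N with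
  | zero => simp
  | succ N ih =>
    rw [Finset.sum_range_succ, ih]
    rcases Nat.even_or_odd N with h | h
    · rw [if_pos (Nat.even_iff.mp h)]
      have := Nat.even_iff.mp h
      omega
    · have h2 := Nat.odd_iff.mp h
      rw [if_neg (by omega)]
      omega

lemma betaB_even (hn : 4 ≤ n) (h2 : n % 2 = 0) : n / 2 ≤ betaB n 3 := by
  classical
  set f : ZMod n → ℕ := fun v => if v.val % 2 = 0 then 1 else 0 with hfdef
  have hindep : IsIndepBroadcast n 3 f := by
    constructor
    · intro v
      refine le_trans ?_ (one_le_ecc hn v)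
      simp only [hfdef]
      split <;> omega
    · intro u v huv hu hv
      have hu2 : u.val % 2 = 0 := by
        by_contra h
        simp only [hfdef, if_neg h] at hu
        exact absurd hu (lt_irrefl 0)
      have hv2 : v.val % 2 = 0 := by
        by_contra h
        simp only [hfdef, if_neg h] at hv
        exact absurd hv (lt_irrefl 0)
      have hfu : f u = 1 := by simp only [hfdef]; rw [if_pos hu2]
      rw [hfu]
      have hm := m_eq u v
      have hu3 : u.val < n := ZMod.val_lt u
      have hv3 : v.val < n := ZMod.val_lt v
      have hab : u.val ≠ v.val := fun h => huv (val_inj' h)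
      refine dist_ge_two hn (val_sub_ne_zero huv) ?_ ?_ <;> rw [hm] <;>
        split_ifs with h <;> omega
  have hcost : circCost n f = n / 2 := by
    unfold circCost
    have hterm : ∀ i ∈ Finset.range n, f (i : ZMod n) = if i % 2 = 0 then 1 else 0 := by
      intro i hi
      simp only [hfdef]
      rw [ZMod.val_cast_of_lt (Finset.mem_range.mp hi)]
    rw [Finset.sum_congr rfl hterm, even_count]
    omega
  have hfin := le_csSup (betaB_bdd hn) ⟨f, hindep, hcost.symm⟩
  unfold betaB
  exact hfin

lemma betaB_odd (hn : 7 ≤ n) (h2 : n % 2 = 1) : n / 2 ≤ betaB n 3 := by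
  classical
  set f : ZMod n → ℕ :=
    fun v => if v.val % 2 = 0 ∧ v.val + 5 ≤ n then (if v.val + 5 = n then 2 else 1) else 0
    with hfdef
  have hfle : ∀ v, f v ≤ 2 := by
    intro v
    simp only [hfdef]
    split_ifs <;> omega
  have hindep : IsIndepBroadcast n 3 f := by
    constructor
    · intro v
      exact le_trans (hfle v) (two_le_ecc (by omega) v)
    · intro u v huv hu hv
      have hu1 : u.val % 2 = 0 ∧ u.val + 5 ≤ n := by
        by_contra h
        simp only [hfdef, if_neg h] at hu
        exact absurd hu (lt_irrefl 0)
      have hv1 : v.val % 2 = 0 ∧ v.val + 5 ≤ n := by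
        by_contra h
        simp only [hfdef, if_neg h] at hv
        exact absurd hv (lt_irrefl 0)
      have hm := m_eq u v
      have hu3 : u.val < n := ZMod.val_lt u
      have hv3 : v.val < n := ZMod.val_lt v
      have hab : u.val ≠ v.val := fun h => huv (val_inj' h)
      have hm0 := val_sub_ne_zero huv
      by_cases h5 : u.val + 5 = n
      · have hfu : f u = 2 := by
          rw [hfdef]
          simp only [if_pos hu1, if_pos h5]
        rw [hfu]
        have h3 := dist_ge_three hn hm0 ?_ ?_ ?_ ?_ ?_
        · omega
        all_goals rw [hm]; split_ifs with h <;> omega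
      · have hfu : f u = 1 := by
          rw [hfdef]
          simp only [if_pos hu1, if_neg h5]
        rw [hfu]
        have h3 := dist_ge_two (by omega) hm0 ?_ ?_
        · omega
        all_goals rw [hm]; split_ifs with h <;> omega
  have hcost : circCost n f = n / 2 := by
    unfold circCost
    have hterm : ∀ i ∈ Finset.range n, f (i : ZMod n)
        = if i % 2 = 0 ∧ i + 5 ≤ n then (if i + 5 = n then 2 else 1) else 0 := by
      intro i hi
      simp only [hfdef]
      rw [ZMod.val_cast_of_lt (Finset.mem_range.mp hi)]
    rw [Finset.sum_congr rfl hterm]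
    have hsplit : ∀ i, (if i % 2 = 0 ∧ i + 5 ≤ n then (if i + 5 = n then 2 else 1) else 0)
        = (if i % 2 = 0 ∧ i + 5 ≤ n then 1 else 0) + (if i = n - 5 then 1 else 0) := by
      intro i
      split_ifs <;> omega
    rw [Finset.sum_congr rfl (fun i _ => hsplit i), Finset.sum_add_distrib]
    have h2nd : (∑ i ∈ Finset.range n, if i = n - 5 then (1 : ℕ) else 0) = 1 := by
      rw [Finset.sum_ite_eq' (Finset.range n) (n - 5) (fun _ => (1 : ℕ))]
      rw [if_pos (Finset.mem_range.mpr (by omega))]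
    have h1st : (∑ i ∈ Finset.range n, if i % 2 = 0 ∧ i + 5 ≤ n then (1 : ℕ) else 0)
        = (n - 3) / 2 := by
      rw [Finset.range_eq_Ico,
        ← Finset.sum_Ico_consecutive _ (by omega : 0 ≤ n - 4) (by omega : n - 4 ≤ n)]
      have hB : (∑ i ∈ Finset.Ico (n - 4) n, if i % 2 = 0 ∧ i + 5 ≤ n then (1 : ℕ) else 0)
          = 0 := by
        apply Finset.sum_eq_zero
        intro i hi
        have := Finset.mem_Ico.mp hi
        rw [if_neg (by omega)]
      have hA2 : (∑ i ∈ Finset.Ico 0 (n - 4), if i % 2 = 0 ∧ i + 5 ≤ n then (1 : ℕ) else 0)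
          = ∑ i ∈ Finset.range (n - 4), if i % 2 = 0 then (1 : ℕ) else 0 := by
        rw [← Finset.range_eq_Ico]
        apply Finset.sum_congr rfl
        intro i hi
        have := Finset.mem_range.mp hi
        by_cases h : i % 2 = 0
        · rw [if_pos ⟨h, by omega⟩, if_pos h]
        · rw [if_neg (by tauto), if_neg h]
      rw [hA2, hB, even_count]
      omega
    rw [h1st, h2nd]
    omega
  have hfin := le_csSup (betaB_bdd (by omega : 4 ≤ n)) ⟨f, hindep, hcost.symm⟩
  unfold betaB
  exact hfin

lemma betaB_five : (5 : ℕ) / 2 ≤ betaB 5 3 := by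
  classical
  set f : ZMod 5 → ℕ := fun v => if v = 0 then 2 else 0 with hfdef
  have hindep : IsIndepBroadcast 5 3 f := by
    constructor
    · intro v
      by_cases h : v = 0
      · refine le_trans ?_ (two_le_ecc (by norm_num) v)
        simp only [hfdef, if_pos h]
        exact le_refl 2
      · simp only [hfdef, if_neg h]
        exact Nat.zero_le _
    · intro u v huv hu hv
      have hu0 : u = 0 := by
        by_contra h
        simp only [hfdef, if_neg h] at hu
        exact absurd hu (lt_irrefl 0)
      have hv0 : v = 0 := by
        by_contra h
        simp only [hfdef, if_neg h] at hv
        exact absurd hv (lt_irrefl 0)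
      exact absurd (hu0.trans hv0.symm) huv
  have hcost : circCost 5 f = 2 := by decide
  have hfin := le_csSup (betaB_bdd (by norm_num : 4 ≤ 5)) ⟨f, hindep, hcost.symm⟩
  unfold betaB
  show 2 ≤ _
  exact hfin

end Aux

theorem stmt7 (n : ℕ) (hn : 4 ≤ n) :
    betaB n 3 = n / 2 := by
  haveI : NeZero n := ⟨by omega⟩
  refine le_antisymm (betaB_le hn) ?_
  rcases Nat.even_or_odd n with he | ho
  · exact betaB_even hn (Nat.even_iff.mp he)
  · by_cases h5 : n = 5
    · subst h5
      exact betaB_five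
    · have h2 := Nat.odd_iff.mp ho
      exact betaB_odd (by omega) h2
end
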